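/- Let p be a prime and n ≥ 0. The numerical semigroup Γ_{p,n} generated by p^n and p^n - p^j for 0 ≤ j ≤ n-1 has conductor c_{p,n} = n·p^{n+1} - (n+2)·p^n + 2, i.e., every integer ≥ c_{p,n} lies in Γ_{p,n}, and c_{p,n} - 1 does not lie in Γ_{p,n} when c_{p,n} ≥ 1. -/

import Mathlib

open Finset

/-- Generators `p^n` and `p^n - p^j` (`0 ≤ j ≤ n-1`) of the numerical
semigroup `Γ_{p,n}`. -/
def gammaGen (p n : ℕ) : Set ℕ :=
  {m | m = p ^ n ∨ ∃ j < n, m = p ^ n - p ^ j}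

/-- The numerical semigroup `Γ_{p,n} = ⟨p^n, p^n - p^{n-1}, …, p^n - 1⟩`. -/
def Gamma (p n : ℕ) : AddSubmonoid ℕ := AddSubmonoid.closure (gammaGen p n)

/-- Minimal number of powers `p^j`, `j ≤ k`, summing to `t`. -/
def nu (p : ℕ) : ℕ → ℕ → ℕ
  | 0, t => t
  | k+1, t => t % p + nu p k (t / p)

lemma div_mod_succ (p x : ℕ) (hp : 2 ≤ p) :
    ((x+1) % p = x % p + 1 ∧ (x+1)/p = x/p) ∨
    (x % p = p - 1 ∧ (x+1) % p = 0 ∧ (x+1)/p = x/p + 1) := by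
  have h := Nat.div_add_mod x p
  have hr : x % p < p := Nat.mod_lt _ (by omega)
  rcases Nat.lt_or_ge (x % p + 1) p with h1 | h1
  · left
    have hx : x + 1 = (x % p + 1) + p * (x / p) := by omega
    constructor
    · rw [hx, Nat.add_mul_mod_self_left, Nat.mod_eq_of_lt h1]
    · rw [hx, Nat.add_mul_div_left _ _ (by omega : 0 < p), Nat.div_eq_of_lt h1, zero_add]
  · right
    have hxr : x % p = p - 1 := by omega
    have hmul : p * (x / p + 1) = p * (x / p) + p := by ring
    have hx : x + 1 = 0 + p * (x / p + 1) := by omega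
    refine ⟨hxr, ?_, ?_⟩
    · rw [hx, Nat.add_mul_mod_self_left]; simp
    · rw [hx, Nat.add_mul_div_left _ _ (by omega : 0 < p)]; simp

lemma nu_succ_le (p : ℕ) (hp : 2 ≤ p) : ∀ k x, nu p k (x + 1) ≤ nu p k x + 1
  | 0, x => le_refl _
  | k+1, x => by
    rcases div_mod_succ p x hp with ⟨h1, h2⟩ | ⟨h0, h1, h2⟩
    · simp only [nu, h1, h2]; omega
    · have := nu_succ_le p hp k (x / p)
      simp only [nu, h1, h2]
      omega

lemma nu_add_le (p : ℕ) (hp : 2 ≤ p) (k x : ℕ) : ∀ y, nu p k (x + y) ≤ nu p k x + y := by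
  intro y
  induction y with
  | zero => simp
  | succ y ih =>
      have h := nu_succ_le p hp k (x + y)
      have he : x + (y + 1) = (x + y) + 1 := by ring
      rw [he]
      omega

lemma nu_le_sum (p : ℕ) (hp : 2 ≤ p) :
    ∀ k (f : ℕ → ℕ), nu p k (∑ j ∈ range (k+1), f j * p ^ j) ≤ ∑ j ∈ range (k+1), f j
  | 0, f => by simp [nu]
  | k+1, f => by
    have hsum : ∑ j ∈ range (k+2), f j * p ^ j
        = f 0 + p * (∑ j ∈ range (k+1), f (j+1) * p ^ j) := by
      rw [Finset.sum_range_succ' (fun j => f j * p ^ j) (k+1), Finset.mul_sum]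
      simp only [pow_zero, mul_one]
      rw [add_comm]
      congr 1
      refine Finset.sum_congr rfl fun j _ => by ring
    have hcnt : ∑ j ∈ range (k+2), f j = (∑ j ∈ range (k+1), f (j+1)) + f 0 :=
      Finset.sum_range_succ' f (k+1)
    have hIH : nu p k (∑ j ∈ range (k+1), f (j+1) * p ^ j) ≤ ∑ j ∈ range (k+1), f (j+1) := by
      simpa using nu_le_sum p hp k (fun j => f (j+1))
    set s := ∑ j ∈ range (k+1), f (j+1) * p ^ j with hs
    have hmod : (f 0 + p * s) % p = f 0 % p := Nat.add_mul_mod_self_left _ _ _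
    have hdiv : (f 0 + p * s) / p = f 0 / p + s := Nat.add_mul_div_left _ _ (by omega)
    have hadd : nu p k (f 0 / p + s) ≤ nu p k s + f 0 / p := by
      rw [add_comm]; exact nu_add_le p hp k s _
    have hf0 : p * (f 0 / p) + f 0 % p = f 0 := Nat.div_add_mod _ _
    have hle : f 0 / p ≤ p * (f 0 / p) := Nat.le_mul_of_pos_left _ (by omega)
    simp only [nu, hsum, hmod, hdiv, hcnt]
    omega

lemma nu_lower (p : ℕ) (hp : 2 ≤ p) :
    ∀ k b t, 1 ≤ b → t + 1 = b * p ^ (k+1) → b * p + k * (p-1) ≤ nu p k t + 1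
  | 0, b, t, hb, ht => by
    have h1 : b * p ^ (0+1) = b * p := by ring
    simp only [nu]
    omega
  | k+1, b, t, hb, ht => by
    have hm : 0 < b * p ^ (k+1) := Nat.mul_pos (by omega) (pow_pos (by omega) _)
    have htm : t + 1 = p * (b * p ^ (k+1)) := by rw [ht]; ring
    have hpm : p * (b * p ^ (k+1) - 1) + p = p * (b * p ^ (k+1)) := by
      have h : (b * p ^ (k+1) - 1) + 1 = b * p ^ (k+1) := by omega
      calc p * (b * p ^ (k+1) - 1) + p = p * ((b * p ^ (k+1) - 1) + 1) := by ring
        _ = p * (b * p ^ (k+1)) := by rw [h]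
    have ht' : t = (p - 1) + p * (b * p ^ (k+1) - 1) := by omega
    have hmod : t % p = p - 1 := by
      rw [ht', Nat.add_mul_mod_self_left, Nat.mod_eq_of_lt (by omega)]
    have hdiv : t / p = b * p ^ (k+1) - 1 := by
      rw [ht', Nat.add_mul_div_left _ _ (by omega : 0 < p), Nat.div_eq_of_lt (by omega), zero_add]
    have hIH := nu_lower p hp k b (b * p ^ (k+1) - 1) hb (by omega)
    have hexp : (k+1) * (p-1) = k * (p-1) + (p-1) := by ring
    simp only [nu, hmod, hdiv]
    omega

lemma nu_upper1 (p : ℕ) (hp : 2 ≤ p) :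
    ∀ k t, t + 1 ≤ p ^ (k+1) → nu p k t ≤ (k+1) * (p-1)
  | 0, t, ht => by
    have h1 : p ^ (0+1) = p := by ring
    have h2 : (0+1) * (p-1) = p - 1 := by ring
    simp only [nu]
    omega
  | k+1, t, ht => by
    have h0 : 0 < p := by omega
    have hpow : p ^ (k+1+1) = p ^ (k+1) * p := by ring
    have hq : t / p + 1 ≤ p ^ (k+1) := by
      have h2 : t / p < p ^ (k+1) := by
        rw [Nat.div_lt_iff_lt_mul h0]; omega
      omega
    have hIH := nu_upper1 p hp k (t / p) hq
    have hr : t % p < p := Nat.mod_lt _ h0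
    have hexp : (k+1+1) * (p-1) = (k+1) * (p-1) + (p-1) := by ring
    simp only [nu]
    omega

lemma nu_upper2 (p : ℕ) (hp : 2 ≤ p) :
    ∀ k t, t + 2 ≤ p ^ (k+1) → nu p k t + 1 ≤ (k+1) * (p-1)
  | 0, t, ht => by
    have h1 : p ^ (0+1) = p := by ring
    have h2 : (0+1) * (p-1) = p - 1 := by ring
    simp only [nu]
    omega
  | k+1, t, ht => by
    have h0 : 0 < p := by omega
    have hpow : p ^ (k+1+1) = p ^ (k+1) * p := by ring
    have hr : t % p < p := Nat.mod_lt _ h0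
    have hdm : p * (t / p) + t % p = t := Nat.div_add_mod _ _
    have hexp : (k+1+1) * (p-1) = (k+1) * (p-1) + (p-1) := by ring
    rcases Nat.lt_or_ge (t % p + 1) p with h1 | h1
    · have hq : t / p + 1 ≤ p ^ (k+1) := by
        have h2 : t / p < p ^ (k+1) := by
          rw [Nat.div_lt_iff_lt_mul h0]; omega
        omega
      have hIH := nu_upper1 p hp k (t / p) hq
      simp only [nu]
      omega
    · have hpow' : p ^ (k+1+1) = p * p ^ (k+1) := by ring
      have hq : t / p + 2 ≤ p ^ (k+1) := by
        have hmul : p * (t / p + 1) = p * (t / p) + p := by ring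
        have h2 : p * (t / p + 1) < p * p ^ (k+1) := by omega
        have h3 := Nat.lt_of_mul_lt_mul_left h2
        omega
      have hIH := nu_upper2 p hp k (t / p) hq
      simp only [nu]
      omega

lemma nu_rep (p : ℕ) (hp : 2 ≤ p) :
    ∀ k t, ∃ f : ℕ → ℕ, (∑ j ∈ range (k+1), f j * p ^ j = t) ∧
      (∑ j ∈ range (k+1), f j = nu p k t)
  | 0, t => ⟨fun _ => t, by simp, by simp [nu]⟩
  | k+1, t => by
    obtain ⟨g, hg1, hg2⟩ := nu_rep p hp k (t / p)
    refine ⟨fun j => Nat.casesOn j (t % p) g, ?_, ?_⟩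
    · rw [Finset.sum_range_succ' (fun j => (Nat.casesOn j (t % p) g : ℕ) * p ^ j) (k+1)]
      have h1 : ∑ j ∈ range (k+1), (Nat.casesOn (j+1) (t % p) g : ℕ) * p ^ (j+1)
          = p * ∑ j ∈ range (k+1), g j * p ^ j := by
        rw [Finset.mul_sum]
        refine Finset.sum_congr rfl fun j _ => ?_
        show g j * p ^ (j+1) = p * (g j * p ^ j)
        ring
      rw [h1, hg1]
      have hdm := Nat.div_add_mod t p
      show p * (t / p) + (t % p) * p ^ 0 = t
      simp only [pow_zero, mul_one]
      omega
    · rw [Finset.sum_range_succ' (fun j => (Nat.casesOn j (t % p) g : ℕ)) (k+1)]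
      show (∑ j ∈ range (k+1), g j) + t % p = nu p (k+1) t
      rw [hg2]
      simp [nu, add_comm]

lemma mem_gamma_of_rep (p n a m : ℕ) (hp : 1 ≤ p) (f : ℕ → ℕ)
    (hm : m + ∑ j ∈ range n, f j * p ^ j = a * p ^ n)
    (hS : ∑ j ∈ range n, f j ≤ a) : m ∈ Gamma p n := by
  set S := ∑ j ∈ range n, f j with hSdef
  have hterm : ∀ j ∈ range n, f j * (p ^ n - p ^ j) + f j * p ^ j = f j * p ^ n := by
    intro j hj
    rw [← Nat.left_distrib, Nat.sub_add_cancel (Nat.pow_le_pow_right hp (le_of_lt (mem_range.mp hj)))]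
  have hsum : (∑ j ∈ range n, f j * (p ^ n - p ^ j)) + (∑ j ∈ range n, f j * p ^ j)
      = S * p ^ n := by
    rw [← Finset.sum_add_distrib, Finset.sum_congr rfl hterm, ← Finset.sum_mul]
  have h2 : (a - S) * p ^ n + S * p ^ n = a * p ^ n := by
    rw [← Nat.add_mul, Nat.sub_add_cancel hS]
  have key : m = (a - S) * p ^ n + ∑ j ∈ range n, f j * (p ^ n - p ^ j) := by
    have h3 : m + (∑ j ∈ range n, f j * p ^ j)
        = ((a - S) * p ^ n + ∑ j ∈ range n, f j * (p ^ n - p ^ j)) + (∑ j ∈ range n, f j * p ^ j) := by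
      rw [add_assoc, hsum, h2, hm]
    exact Nat.add_right_cancel h3
  rw [key]
  refine AddSubmonoid.add_mem _ ?_ (AddSubmonoid.sum_mem _ ?_)
  · have hg : p ^ n ∈ Gamma p n := AddSubmonoid.subset_closure (Or.inl rfl)
    simpa [nsmul_eq_mul] using nsmul_mem hg (a - S)
  · intro j hj
    have hg : p ^ n - p ^ j ∈ Gamma p n :=
      AddSubmonoid.subset_closure (Or.inr ⟨j, mem_range.mp hj, rfl⟩)
    simpa [nsmul_eq_mul] using nsmul_mem hg (f j)

lemma gamma_rep (p n : ℕ) (hp : 1 ≤ p) {m : ℕ} (hm : m ∈ Gamma p n) :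
    ∃ a, ∃ f : ℕ → ℕ, m + ∑ j ∈ range n, f j * p ^ j = a * p ^ n ∧ ∑ j ∈ range n, f j ≤ a := by
  induction hm using AddSubmonoid.closure_induction with
  | mem x hx =>
    rcases hx with h | ⟨j, hj, h⟩
    · exact ⟨1, fun _ => 0, by simp [h], by simp⟩
    · refine ⟨1, fun i => if i = j then 1 else 0, ?_, ?_⟩
      · rw [h]
        have h1 : ∑ i ∈ range n, (if i = j then 1 else 0) * p ^ i = p ^ j := by
          rw [Finset.sum_congr rfl (fun i _ => ?_)]
          · exact Finset.sum_ite_eq' (range n) j (fun i => p ^ i) |>.trans (by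
              simp [mem_range.mpr hj])
          · split <;> simp_all
        rw [h1, Nat.sub_add_cancel (Nat.pow_le_pow_right hp (le_of_lt hj)), one_mul]
      · simp [Finset.sum_ite_eq' (range n) j (fun _ => 1), mem_range.mpr hj]
  | zero => exact ⟨0, fun _ => 0, by simp, by simp⟩
  | add x y hx hy ihx ihy =>
    obtain ⟨a1, f1, hs1, hc1⟩ := ihx
    obtain ⟨a2, f2, hs2, hc2⟩ := ihy
    refine ⟨a1 + a2, fun j => f1 j + f2 j, ?_, ?_⟩
    · have he : ∑ j ∈ range n, (f1 j + f2 j) * p ^ j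
          = (∑ j ∈ range n, f1 j * p ^ j) + ∑ j ∈ range n, f2 j * p ^ j := by
        rw [← Finset.sum_add_distrib]
        exact Finset.sum_congr rfl fun j _ => by ring
      rw [he]
      calc x + y + ((∑ j ∈ range n, f1 j * p ^ j) + ∑ j ∈ range n, f2 j * p ^ j)
          = (x + ∑ j ∈ range n, f1 j * p ^ j) + (y + ∑ j ∈ range n, f2 j * p ^ j) := by ring
        _ = a1 * p ^ n + a2 * p ^ n := by rw [hs1, hs2]
        _ = (a1 + a2) * p ^ n := by ring
    · rw [Finset.sum_add_distrib]
      exact Nat.add_le_add hc1 hc2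

/-- `Γ_{p,n}` has conductor `c = n·p^{n+1} - (n+2)·p^n + 2`: every integer
`≥ c` lies in `Γ_{p,n}`, and `c - 1` does not when `c ≥ 1`. -/
theorem Gamma_conductor (p n : ℕ) (hp : p.Prime) (c : ℕ)
    (hc : (c : ℤ) = n * p ^ (n + 1) - (n + 2) * p ^ n + 2) :
    (∀ m, c ≤ m → m ∈ Gamma p n) ∧ (1 ≤ c → c - 1 ∉ Gamma p n) := by
  have hp2 : 2 ≤ p := hp.two_le
  have h1p : 1 ≤ p := by omega
  by_cases hB : 2 ≤ n * (p - 1)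
  · -- main case
    have hn : 1 ≤ n := by
      rcases Nat.eq_zero_or_pos n with h | h
      · subst h; simp at hB
      · exact h
    obtain ⟨k, rfl⟩ : ∃ k, n = k + 1 := ⟨n - 1, by omega⟩
    obtain ⟨B, hBdef⟩ : ∃ B, (k+1) * (p-1) = B := ⟨_, rfl⟩
    rw [hBdef] at hB
    have hPp : 2 ≤ p ^ (k+1) := le_trans hp2 (Nat.le_self_pow (by omega) p)
    have hBZ : (B : ℤ) = ((k:ℤ)+1) * ((p:ℤ) - 1) := by
      rw [← hBdef]
      push_cast [Nat.cast_sub h1p]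
      ring
    have hc' : (c : ℤ) = ((B:ℤ) - 2) * (p:ℤ)^(k+1) + 2 := by
      rw [hc, hBZ]
      push_cast
      ring
    have hcD : c = (B - 2) * p^(k+1) + 2 := by
      have h3 : ((((B - 2) * p^(k+1) + 2 : ℕ)) : ℤ) = ((B:ℤ) - 2) * (p:ℤ)^(k+1) + 2 := by
        push_cast [Nat.cast_sub hB]
        ring
      exact_mod_cast hc'.trans h3.symm
    have hBP1 : (B-1) * p^(k+1) + p^(k+1) = B * p^(k+1) := by
      have h : B - 1 + 1 = B := by omega
      calc (B-1)*p^(k+1) + p^(k+1) = ((B-1)+1) * p^(k+1) := by ring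
        _ = B * p^(k+1) := by rw [h]
    have hBP2 : (B-2) * p^(k+1) + 2 * p^(k+1) = B * p^(k+1) := by
      have h : B - 2 + 2 = B := by omega
      calc (B-2)*p^(k+1) + 2 * p^(k+1) = ((B-2)+2) * p^(k+1) := by ring
        _ = B * p^(k+1) := by rw [h]
    constructor
    · intro m hm
      by_cases hcase : m ≤ (B-1) * p^(k+1)
      · obtain ⟨f, hf1, hf2⟩ := nu_rep p hp2 k ((B-1) * p^(k+1) - m)
        refine mem_gamma_of_rep p (k+1) (B-1) m h1p f ?_ ?_
        · rw [hf1]; omega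
        · rw [hf2]
          have ht2 : ((B-1) * p^(k+1) - m) + 2 ≤ p^(k+1) := by omega
          have h := nu_upper2 p hp2 k _ ht2
          omega
      · obtain ⟨u, hu⟩ : ∃ u, m = (B-1) * p^(k+1) + 1 + u :=
          ⟨m - ((B-1) * p^(k+1) + 1), by omega⟩
        obtain ⟨Q, R, hQR, hRlt⟩ : ∃ Q R, u = p^(k+1) * Q + R ∧ R < p^(k+1) :=
          ⟨u / p^(k+1), u % p^(k+1), (Nat.div_add_mod u (p^(k+1))).symm,
            Nat.mod_lt _ (by omega)⟩
        obtain ⟨f, hf1, hf2⟩ := nu_rep p hp2 k (p^(k+1) - 1 - R)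
        refine mem_gamma_of_rep p (k+1) (B + Q) m h1p f ?_ ?_
        · rw [hf1]
          have ha : (B + Q) * p^(k+1)
              = B * p^(k+1) + p^(k+1) * Q := by ring
          omega
        · rw [hf2]
          have ht1 : (p^(k+1) - 1 - R) + 1 ≤ p^(k+1) := by omega
          have h := nu_upper1 p hp2 k _ ht1
          omega
    · intro h1c hmem
      obtain ⟨a, f, hsum, hcnt⟩ := gamma_rep p (k+1) h1p hmem
      have hT := nu_le_sum p hp2 k f
      have haD : B - 2 < a := by
        by_contra h
        push_neg at h
        have h2 : a * p^(k+1) ≤ (B-2) * p^(k+1) := mul_le_mul_left h _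
        omega
      obtain ⟨b, hb⟩ : ∃ b, a = (B - 2) + b := ⟨a - (B-2), by omega⟩
      have hb1 : 1 ≤ b := by omega
      have hab : a * p^(k+1) = (B-2) * p^(k+1) + b * p^(k+1) := by rw [hb]; ring
      have hTb : (∑ j ∈ range (k+1), f j * p^j) + 1 = b * p^(k+1) := by omega
      have hlow := nu_lower p hp2 k b _ hb1 hTb
      have hbp : b + p ≤ b * p + 1 := by
        obtain ⟨b', rfl⟩ : ∃ b', b = b' + 1 := ⟨b - 1, by omega⟩
        have h1 : b' ≤ b' * p := Nat.le_mul_of_pos_right _ (by omega)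
        have he : (b' + 1) * p = b' * p + p := by ring
        omega
      have hexp : (k+1) * (p-1) = k * (p-1) + (p - 1) := by ring
      omega
  · -- degenerate case : 1 is a generator and c = 0
    have hcase : n = 0 ∨ (n = 1 ∧ p = 2) := by
      rcases Nat.eq_zero_or_pos n with h | h
      · exact Or.inl h
      · right
        have h1 : n ≤ n * (p-1) := Nat.le_mul_of_pos_right _ (by omega)
        have h2 : (p-1) ≤ n * (p-1) := Nat.le_mul_of_pos_left _ h
        omega
    have hone : (1:ℕ) ∈ gammaGen p n := by
      rcases hcase with h | ⟨h1, h2⟩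
      · subst h
        exact Or.inl (by simp)
      · subst h1; subst h2
        exact Or.inr ⟨0, by omega, by norm_num⟩
    have hall : ∀ m : ℕ, m ∈ Gamma p n := by
      intro m
      have h1 : (1:ℕ) ∈ Gamma p n := AddSubmonoid.subset_closure hone
      simpa using nsmul_mem h1 m
    refine ⟨fun m _ => hall m, fun h1c _ => ?_⟩
    have hc0 : c = 0 := by
      rcases hcase with h | ⟨h1, h2⟩
      · subst h
        norm_num at hc
        exact_mod_cast hc
      · subst h1; subst h2
        norm_num at hc
        exact_mod_cast hc
    omega
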